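/- arXiv:1804.01311 — 2 statements merged into one kernel-verified Lean document; each statement's English description precedes it below -/
import Mathlib

section
/- For any homogeneous polynomial p on ℝ^d of degree m, p(∂) e^{-‖x‖²/2} = Σ_{j=0}^{⌊m/2⌋} ((-1)^{m-j}/(2^j j!)) e^{-‖x‖²/2} (Δ^j p)(x), where Δ is the Laplacian and p(∂) the constant-coefficient operator obtained from p. -/
open Finset MvPolynomial Real

noncomputable section

/-- Partial derivative in direction `l` on Euclidean space. -/
def pd (d : ℕ) (l : Fin d) (f : EuclideanSpace ℝ (Fin d) → ℝ) :
    EuclideanSpace ℝ (Fin d) → ℝ :=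
  fun x => fderiv ℝ f x (EuclideanSpace.single l 1)

/-- Iterated partial derivative for a multi-index `s`. -/
def Dmulti (d : ℕ) (s : Fin d →₀ ℕ) (f : EuclideanSpace ℝ (Fin d) → ℝ) :
    EuclideanSpace ℝ (Fin d) → ℝ :=
  (List.finRange d).foldr (fun l g => (pd d l)^[s l] g) f

/-- The constant-coefficient differential operator `p(∂)`. -/
def polyOp (d : ℕ) (p : MvPolynomial (Fin d) ℝ) (f : EuclideanSpace ℝ (Fin d) → ℝ) :
    EuclideanSpace ℝ (Fin d) → ℝ :=
  fun x => ∑ s ∈ p.support, p.coeff s * Dmulti d s f x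

/-- The Laplacian on functions on Euclidean space. -/
def lap (d : ℕ) (f : EuclideanSpace ℝ (Fin d) → ℝ) : EuclideanSpace ℝ (Fin d) → ℝ :=
  fun x => ∑ l : Fin d, pd d l (pd d l f) x

/-- The formal Laplacian on polynomials. -/
def lapPoly (d : ℕ) (p : MvPolynomial (Fin d) ℝ) : MvPolynomial (Fin d) ℝ :=
  ∑ l : Fin d, pderiv l (pderiv l p)

/-- Evaluation of a polynomial at a point of Euclidean space. -/
def peval (d : ℕ) (p : MvPolynomial (Fin d) ℝ) (x : EuclideanSpace ℝ (Fin d)) : ℝ :=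
  MvPolynomial.eval (fun l => x l) p

/-- The radial operator `(1/r) d/dr`. -/
def radOp (g : ℝ → ℝ) : ℝ → ℝ := fun r => deriv g r / r

namespace Hobson

variable {d : ℕ}

/-! ### Algebraic lemmas about `lapPoly` -/

lemma pderiv_comm (i j : Fin d) (q : MvPolynomial (Fin d) ℝ) :
    pderiv i (pderiv j q) = pderiv j (pderiv i q) := by
  induction q using MvPolynomial.induction_on' with
  | monomial s a =>
    rcases eq_or_ne i j with h | h
    · subst h; rfl
    · simp only [pderiv_monomial]
      rw [tsub_right_comm]
      congr 1
      rw [Finsupp.tsub_apply, Finsupp.tsub_apply, Finsupp.single_apply, Finsupp.single_apply]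
      simp [h, Ne.symm h]
      ring
  | add p q hp hq => simp [map_add, hp, hq]

lemma lapPoly_add (p q : MvPolynomial (Fin d) ℝ) :
    lapPoly d (p + q) = lapPoly d p + lapPoly d q := by
  simp [lapPoly, map_add, Finset.sum_add_distrib]

lemma lapPoly_smul (a : ℝ) (q : MvPolynomial (Fin d) ℝ) :
    lapPoly d (a • q) = a • lapPoly d q := by
  simp [lapPoly, map_smul, Finset.smul_sum]

lemma lapPoly_zero : lapPoly d 0 = 0 := by simp [lapPoly]

lemma lapPoly_pderiv (l : Fin d) (q : MvPolynomial (Fin d) ℝ) :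
    lapPoly d (pderiv l q) = pderiv l (lapPoly d q) := by
  simp only [lapPoly, map_sum]
  exact Finset.sum_congr rfl fun i _ => by rw [pderiv_comm i i (pderiv l q), pderiv_comm i l,
    pderiv_comm i l (pderiv i q)]

lemma iter_add (j : ℕ) (p q : MvPolynomial (Fin d) ℝ) :
    (lapPoly d)^[j] (p + q) = (lapPoly d)^[j] p + (lapPoly d)^[j] q := by
  induction j generalizing p q with
  | zero => rfl
  | succ j ih => simp [Function.iterate_succ_apply, lapPoly_add, ih]

lemma iter_smul (j : ℕ) (a : ℝ) (q : MvPolynomial (Fin d) ℝ) :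
    (lapPoly d)^[j] (a • q) = a • (lapPoly d)^[j] q := by
  induction j generalizing q with
  | zero => rfl
  | succ j ih => simp [Function.iterate_succ_apply, lapPoly_smul, ih]

lemma iter_zero (j : ℕ) : (lapPoly d)^[j] (0 : MvPolynomial (Fin d) ℝ) = 0 := by
  induction j with
  | zero => rfl
  | succ j ih => simp [Function.iterate_succ_apply, lapPoly_zero, ih]

lemma iter_pderiv (j : ℕ) (l : Fin d) (q : MvPolynomial (Fin d) ℝ) :
    (lapPoly d)^[j] (pderiv l q) = pderiv l ((lapPoly d)^[j] q) := by
  induction j generalizing q with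
  | zero => rfl
  | succ j ih => simp [Function.iterate_succ_apply, lapPoly_pderiv, ih]

lemma iter_sum {α : Type*} (j : ℕ) (t : Finset α) (f : α → MvPolynomial (Fin d) ℝ) :
    (lapPoly d)^[j] (∑ a ∈ t, f a) = ∑ a ∈ t, (lapPoly d)^[j] (f a) := by
  classical
  induction t using Finset.induction with
  | empty => simp [iter_zero]
  | insert _ _ hnot ih =>
    rw [Finset.sum_insert hnot, Finset.sum_insert hnot, iter_add, ih]

lemma lap_X_mul (l : Fin d) (q : MvPolynomial (Fin d) ℝ) :
    lapPoly d (X l * q) = X l * lapPoly d q + (2 : ℝ) • pderiv l q := by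
  classical
  have key : ∀ i : Fin d, pderiv i (pderiv i (X l * q)) =
      X l * pderiv i (pderiv i q) +
        (if i = l then (2 : ℝ) • pderiv i q else 0) := by
    intro i
    rcases eq_or_ne i l with h | h
    · subst h
      simp [pderiv_mul]
      module
    · simp [pderiv_mul, pderiv_X_of_ne (Ne.symm h), h]
  simp only [lapPoly, key, Finset.sum_add_distrib, Finset.sum_ite_eq' Finset.univ l,
    Finset.mem_univ, if_true, ← Finset.mul_sum]

/-- coefficient of the truncated exponential -/
def cc (j : ℕ) : ℝ := (-1) ^ j / (2 ^ j * j.factorial)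

lemma cc_zero : cc 0 = 1 := by simp [cc]

lemma cc_succ (j : ℕ) : cc (j + 1) * (2 * (j + 1)) = -cc j := by
  have h1 : (j.factorial : ℝ) ≠ 0 := Nat.cast_ne_zero.2 j.factorial_ne_zero
  simp only [cc, Nat.factorial_succ, pow_succ]
  push_cast
  field_simp

lemma cc_shift (m j : ℕ) (hj : j ≤ m) :
    (-1 : ℝ) ^ (m - j) / (2 ^ j * j.factorial) = (-1 : ℝ) ^ m * cc j := by
  have hm : (-1 : ℝ) ^ m = (-1) ^ (m - j) * (-1) ^ j := by
    rw [← pow_add]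
    congr 1
    omega
  have h2 : ((-1 : ℝ) ^ j) * ((-1 : ℝ) ^ j) = 1 := by
    rw [← pow_add, ← two_mul, pow_mul]
    norm_num
  have h4 : ((-1:ℝ) ^ (m - j) * (-1) ^ j) * ((-1) ^ j / (2 ^ j * j.factorial)) =
      ((-1) ^ j * (-1) ^ j) * ((-1) ^ (m - j) / (2 ^ j * j.factorial)) := by ring
  rw [hm, cc, h4, h2, one_mul]

lemma lap_iter_X_mul (j : ℕ) (l : Fin d) (q : MvPolynomial (Fin d) ℝ) :
    (lapPoly d)^[j + 1] (X l * q) =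
      X l * (lapPoly d)^[j + 1] q + ((2 * (j + 1) : ℝ)) • pderiv l ((lapPoly d)^[j] q) := by
  induction j with
  | zero => simpa using lap_X_mul l q
  | succ j ih =>
    rw [Function.iterate_succ_apply' (lapPoly d) (j + 1), ih, lapPoly_add, lapPoly_smul,
      lap_X_mul, lapPoly_pderiv, ← Function.iterate_succ_apply' (lapPoly d) j,
      ← iter_pderiv, ← Function.iterate_succ_apply' (lapPoly d) (j + 1)]
    push_cast
    module

/-- truncated exponential of `-Δ/2` -/
def En (n : ℕ) (q : MvPolynomial (Fin d) ℝ) : MvPolynomial (Fin d) ℝ :=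
  ∑ j ∈ range n, cc j • (lapPoly d)^[j] q

lemma En_one_one : En 1 (1 : MvPolynomial (Fin d) ℝ) = 1 := by
  simp [En, cc_zero]

lemma pderiv_En (l : Fin d) (n : ℕ) (q : MvPolynomial (Fin d) ℝ) :
    pderiv l (En n q) = ∑ j ∈ range n, cc j • pderiv l ((lapPoly d)^[j] q) := by
  simp [En, map_sum, map_smul]

lemma En_step (l : Fin d) (q : MvPolynomial (Fin d) ℝ) (n : ℕ)
    (h : (lapPoly d)^[n] q = 0) :
    En (n + 1) (X l * q) = X l * En n q - pderiv l (En n q) := by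
  have expand : En (n + 1) (X l * q) =
      (∑ j ∈ range n, cc (j + 1) • (lapPoly d)^[j + 1] (X l * q)) + X l * q := by
    simp [En, Finset.sum_range_succ', cc_zero]
  rw [expand]
  have term : ∀ j ∈ range n, cc (j + 1) • (lapPoly d)^[j + 1] (X l * q) =
      X l * (cc (j + 1) • (lapPoly d)^[j + 1] q) - cc j • pderiv l ((lapPoly d)^[j] q) := by
    intro j _
    rw [lap_iter_X_mul, smul_add, smul_smul, cc_succ, mul_smul_comm, neg_smul, sub_eq_add_neg]
  rw [Finset.sum_congr rfl term, Finset.sum_sub_distrib, ← pderiv_En]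
  have hEn1 : (∑ j ∈ range n, X l * (cc (j + 1) • (lapPoly d)^[j + 1] q)) + X l * q
      = X l * En n q := by
    rw [← Finset.mul_sum, ← mul_add]
    congr 1
    have h1 : En (n + 1) q = En n q + cc n • (lapPoly d)^[n] q := by
      simp [En, Finset.sum_range_succ]
    have h2 : En (n + 1) q = (∑ j ∈ range n, cc (j + 1) • (lapPoly d)^[j + 1] q) + q := by
      simp [En, Finset.sum_range_succ', cc_zero]
    rw [← h2, h1, h, smul_zero, add_zero]
  rw [sub_add_eq_add_sub, hEn1]

lemma nilp_step (l : Fin d) (q : MvPolynomial (Fin d) ℝ) (n : ℕ)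
    (h : (lapPoly d)^[n] q = 0) :
    (lapPoly d)^[n + 1] (X l * q) = 0 := by
  rw [lap_iter_X_mul, Function.iterate_succ_apply' (lapPoly d) n, h, lapPoly_zero]
  simp

/-- the operator `∂ₗ - Xₗ·` -/
def B (l : Fin d) (q : MvPolynomial (Fin d) ℝ) : MvPolynomial (Fin d) ℝ :=
  pderiv l q - X l * q

lemma B_smul (l : Fin d) (a : ℝ) (q : MvPolynomial (Fin d) ℝ) :
    B l (a • q) = a • B l q := by
  simp [B, map_smul, smul_sub, mul_smul_comm]

lemma B_iter_smul (l : Fin d) (k : ℕ) (a : ℝ) (q : MvPolynomial (Fin d) ℝ) :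
    (B l)^[k] (a • q) = a • (B l)^[k] q := by
  induction k generalizing q with
  | zero => rfl
  | succ k ih => simp [Function.iterate_succ_apply, B_smul, ih]

lemma B_En (l : Fin d) (q : MvPolynomial (Fin d) ℝ) (n : ℕ)
    (h : (lapPoly d)^[n] q = 0) :
    B l (En n q) = -En (n + 1) (X l * q) := by
  rw [En_step l q n h, B]; ring

lemma B_iter (l : Fin d) (k : ℕ) (q : MvPolynomial (Fin d) ℝ) (n : ℕ)
    (h : (lapPoly d)^[n] q = 0) :
    (B l)^[k] (En n q) = ((-1 : ℝ) ^ k) • En (n + k) (X l ^ k * q) ∧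
      (lapPoly d)^[n + k] (X l ^ k * q) = 0 := by
  induction k with
  | zero => simpa using h
  | succ k ih =>
    obtain ⟨h1, h2⟩ := ih
    constructor
    · rw [Function.iterate_succ_apply' (B l), h1, B_smul, B_En l _ _ h2, pow_succ]
      rw [show X l ^ (k+1) * q = X l * (X l ^ k * q) by ring]
      rw [show n + (k + 1) = n + k + 1 by omega]
      module
    · rw [show X l ^ (k+1) * q = X l * (X l ^ k * q) by ring,
        show n + (k + 1) = n + k + 1 by omega]
      exact nilp_step l _ _ h2

lemma fold_main (L : List (Fin d)) (s : Fin d →₀ ℕ) (q : MvPolynomial (Fin d) ℝ) (n : ℕ)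
    (h : (lapPoly d)^[n] q = 0) :
    L.foldr (fun l r => (B l)^[s l] r) (En n q) =
      ((-1 : ℝ) ^ ((L.map s).sum)) •
        En (n + (L.map s).sum) (L.foldr (fun l r => X l ^ s l * r) q) ∧
      (lapPoly d)^[n + (L.map s).sum] (L.foldr (fun l r => X l ^ s l * r) q) = 0 := by
  induction L with
  | nil => simpa using h
  | cons l L ihL =>
    obtain ⟨h1, h2⟩ := ihL
    simp only [List.foldr_cons, List.map_cons, List.sum_cons]
    rw [h1, B_iter_smul]
    obtain ⟨g1, g2⟩ := B_iter l (s l) _ _ h2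
    constructor
    · rw [g1, smul_smul, ← pow_add]
      rw [show (L.map s).sum + s l = s l + (L.map s).sum by omega,
        show n + (L.map s).sum + s l = n + (s l + (L.map s).sum) by omega]
    · rw [show n + (s l + (L.map s).sum) = n + (L.map s).sum + s l by omega]
      exact g2

lemma fold_X_eq_monomial (s : Fin d →₀ ℕ) :
    (List.finRange d).foldr (fun l r => X l ^ s l * r) (1 : MvPolynomial (Fin d) ℝ) =
      monomial s (1 : ℝ) := by
  have hfold : ∀ (L : List (Fin d)) (b : MvPolynomial (Fin d) ℝ),
      L.foldr (fun l r => X l ^ s l * r) b = (L.map (fun l => X l ^ s l)).prod * b := by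
    intro L b
    induction L with
    | nil => simp
    | cons a L ih => simp [ih, mul_assoc]
  rw [hfold, mul_one, ← Fin.prod_univ_def]
  rw [monomial_eq, C_1, one_mul]
  rw [Finsupp.prod]
  refine (Finset.prod_subset (Finset.subset_univ _) ?_).symm
  intro i _ hi
  rw [Finsupp.notMem_support_iff.mp hi, pow_zero]

lemma list_sum_eq_degree (s : Fin d →₀ ℕ) :
    ((List.finRange d).map s).sum = Finsupp.degree s := by
  rw [← Fin.sum_univ_def, Finsupp.degree]
  refine (Finset.sum_subset (Finset.subset_univ _) ?_).symm
  intro i _ hi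
  exact Finsupp.notMem_support_iff.mp hi

/-! ### Homogeneity and vanishing of iterated Laplacians -/

lemma pderiv_isHomogeneous {q : MvPolynomial (Fin d) ℝ} {k : ℕ}
    (h : q.IsHomogeneous k) (l : Fin d) : (pderiv l q).IsHomogeneous (k - 1) := by
  rw [q.as_sum, map_sum]
  refine IsHomogeneous.sum _ _ _ fun s hs => ?_
  rw [pderiv_monomial]
  rcases Nat.eq_zero_or_pos (s l) with h0 | h0
  · rw [h0, Nat.cast_zero, mul_zero]
    simpa using isHomogeneous_zero (Fin d) ℝ (k - 1)
  · refine isHomogeneous_monomial _ ?_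
    have hdeg : Finsupp.degree s = k := by
      rw [Finsupp.degree_eq_weight_one]; exact h (MvPolynomial.mem_support_iff.mp hs)
    have hle : Finsupp.single l 1 ≤ s := by
      rw [Finsupp.single_le_iff]; exact h0
    have hkey : Finsupp.degree (s - Finsupp.single l 1) + Finsupp.degree (Finsupp.single l 1)
        = k := by
      simp only [Finsupp.degree_eq_weight_one]
      rw [← map_add, tsub_add_cancel_of_le hle]
      rw [Finsupp.degree_eq_weight_one] at hdeg
      exact hdeg
    have hsing : Finsupp.degree (Finsupp.single l 1) = 1 := by
      simp [Finsupp.degree_apply, Finsupp.support_single_ne_zero]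
    omega

lemma lapPoly_isHomogeneous {q : MvPolynomial (Fin d) ℝ} {k : ℕ}
    (h : q.IsHomogeneous k) : (lapPoly d q).IsHomogeneous (k - 2) := by
  refine IsHomogeneous.sum _ _ _ fun l _ => ?_
  have := pderiv_isHomogeneous (pderiv_isHomogeneous h l) l
  simpa [Nat.sub_sub] using this

lemma pderiv_of_homog_zero {q : MvPolynomial (Fin d) ℝ}
    (h : q.IsHomogeneous 0) (l : Fin d) : pderiv l q = 0 := by
  have h0 := (MvPolynomial.totalDegree_eq_zero_iff (σ := Fin d) (R := ℝ) q).mp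
    (MvPolynomial.totalDegree_zero_iff_isHomogeneous (σ := Fin d) (R := ℝ) |>.mpr h)
  rw [q.as_sum, map_sum]
  refine Finset.sum_eq_zero fun s hs => ?_
  rw [pderiv_monomial, h0 s hs l, Nat.cast_zero, mul_zero, monomial_zero]

lemma lap_iter_vanish {q : MvPolynomial (Fin d) ℝ} {k : ℕ}
    (h : q.IsHomogeneous k) {j : ℕ} (hj : 2 * j > k) :
    (lapPoly d)^[j] q = 0 := by
  induction j generalizing q k with
  | zero => omega
  | succ j ih =>
    rw [Function.iterate_succ_apply]
    rcases le_or_gt 2 k with hk | hk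
    · exact ih (lapPoly_isHomogeneous h) (by omega)
    · have hlap : lapPoly d q = 0 := by
        unfold lapPoly
        refine Finset.sum_eq_zero fun l _ => ?_
        have h1 : (pderiv l q).IsHomogeneous 0 := by
          have := pderiv_isHomogeneous h l
          interval_cases k
          · simpa using this
          · simpa using this
        rw [pderiv_of_homog_zero h1]
      rw [hlap]
      exact iter_zero j

/-! ### Analytic lemmas -/

/-- derivative CLM of polynomial evaluation -/
def deval (q : MvPolynomial (Fin d) ℝ) (v : Fin d → ℝ) : (Fin d → ℝ) →L[ℝ] ℝ :=
  ∑ l : Fin d, MvPolynomial.eval v (pderiv l q) •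
    (ContinuousLinearMap.proj l : (Fin d → ℝ) →L[ℝ] ℝ)

lemma deval_apply (q : MvPolynomial (Fin d) ℝ) (v u : Fin d → ℝ) :
    deval q v u = ∑ l : Fin d, MvPolynomial.eval v (pderiv l q) * u l := by
  simp [deval]

lemma hasFDerivAt_eval (q : MvPolynomial (Fin d) ℝ) (v : Fin d → ℝ) :
    HasFDerivAt (fun v : Fin d → ℝ => MvPolynomial.eval v q) (deval q v) v := by
  induction q using MvPolynomial.induction_on with
  | C a =>
    have h : deval (C a : MvPolynomial (Fin d) ℝ) v = 0 := by
      simp [deval, pderiv_C]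
    rw [h]
    simpa [eval_C] using (hasFDerivAt_const a v)
  | add p q hp hq =>
    have h : deval (p + q) v = deval p v + deval q v := by
      simp [deval, map_add, add_smul, Finset.sum_add_distrib]
    rw [h]
    simpa only [map_add, Pi.add_def] using hp.add hq
  | mul_X p i hp =>
    classical
    have h2 : HasFDerivAt (fun v : Fin d → ℝ => v i)
        (ContinuousLinearMap.proj i : (Fin d → ℝ) →L[ℝ] ℝ) v := by
      exact (ContinuousLinearMap.proj i : (Fin d → ℝ) →L[ℝ] ℝ).hasFDerivAt
    have key := hp.mul h2
    have heq : deval (p * X i) v =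
        MvPolynomial.eval v p • (ContinuousLinearMap.proj i : (Fin d → ℝ) →L[ℝ] ℝ)
          + v i • deval p v := by
      refine ContinuousLinearMap.ext fun u => ?_
      rw [deval_apply]
      simp only [ContinuousLinearMap.add_apply, ContinuousLinearMap.smul_apply,
        ContinuousLinearMap.proj_apply, deval_apply, smul_eq_mul]
      have hterm : ∀ l : Fin d, MvPolynomial.eval v (pderiv l (p * X i)) * u l =
          v i * (MvPolynomial.eval v (pderiv l p) * u l) +
            (if l = i then MvPolynomial.eval v p * u i else 0) := by
        intro l
        rw [pderiv_mul]
        rcases eq_or_ne l i with h | h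
        · subst h; simp [eval_X]; ring
        · simp [pderiv_X_of_ne (Ne.symm h), h, eval_X]; ring
      rw [Finset.sum_congr rfl fun l _ => hterm l, Finset.sum_add_distrib,
        Finset.sum_ite_eq' Finset.univ i, ← Finset.mul_sum]
      simp [add_comm]
    rw [heq]
    have hfun : (fun v : Fin d → ℝ => MvPolynomial.eval v (p * X i)) =
        fun v => MvPolynomial.eval v p * v i := by
      funext v; simp [eval_mul, eval_X]
    rw [hfun]
    exact key

/-- the gaussian exponent polynomial -/
def w (d : ℕ) : MvPolynomial (Fin d) ℝ := C (-(1/2) : ℝ) * ∑ l : Fin d, X l ^ 2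

lemma eval_w (v : Fin d → ℝ) :
    MvPolynomial.eval v (w d) = -(∑ l : Fin d, v l ^ 2) / 2 := by
  simp [w, eval_C, eval_X, map_sum]
  ring

lemma pderiv_w (l : Fin d) : pderiv l (w d) = -X l := by
  classical
  rw [w, pderiv_C_mul, map_sum]
  have h : ∀ i : Fin d, pderiv l (X i ^ 2 : MvPolynomial (Fin d) ℝ) =
      if i = l then 2 * X l else 0 := by
    intro i
    rcases eq_or_ne i l with h | h
    · subst h; rw [pderiv_pow]; simp
    · rw [pderiv_pow]; simp [pderiv_X_of_ne h, h]
  rw [Finset.sum_congr rfl fun i _ => h i, Finset.sum_ite_eq' Finset.univ l]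
  simp only [Finset.mem_univ, if_true]
  rw [show ((2 : MvPolynomial (Fin d) ℝ) * X l) = C (2:ℝ) * X l by
    rw [show (C (2:ℝ) : MvPolynomial (Fin d) ℝ) = 2 from map_ofNat C 2], ← mul_assoc, ← C_mul]
  norm_num

/-- The key analytic lemma -/
lemma pd_gauss (l : Fin d) (q : MvPolynomial (Fin d) ℝ) :
    pd d l (fun y => Real.exp (MvPolynomial.eval (fun i => y i) (w d)) *
        MvPolynomial.eval (fun i => y i) q) =
      fun y => Real.exp (MvPolynomial.eval (fun i => y i) (w d)) *
        MvPolynomial.eval (fun i => y i) (B l q) := by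
  funext x
  classical
  set e : EuclideanSpace ℝ (Fin d) →L[ℝ] (Fin d → ℝ) :=
    (PiLp.continuousLinearEquiv 2 ℝ (fun _ : Fin d => ℝ) :
      EuclideanSpace ℝ (Fin d) ≃L[ℝ] (Fin d → ℝ)).toContinuousLinearMap with he
  set v : Fin d → ℝ := fun i => x i with hv
  have hw : HasFDerivAt (fun v : Fin d → ℝ => Real.exp (MvPolynomial.eval v (w d)))
      (Real.exp (MvPolynomial.eval v (w d)) • deval (w d) v) v :=
    (hasFDerivAt_eval (w d) v).exp
  have hq : HasFDerivAt (fun v : Fin d → ℝ => MvPolynomial.eval v q) (deval q v) v :=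
    hasFDerivAt_eval q v
  have hG := hw.mul hq
  have hF : HasFDerivAt
      (fun y : EuclideanSpace ℝ (Fin d) => Real.exp (MvPolynomial.eval (fun i => y i) (w d)) *
        MvPolynomial.eval (fun i => y i) q)
      ((Real.exp (MvPolynomial.eval v (w d)) • deval q v +
        MvPolynomial.eval v q • (Real.exp (MvPolynomial.eval v (w d)) • deval (w d) v)).comp e)
      x := HasFDerivAt.comp (g := fun v : Fin d → ℝ => Real.exp (MvPolynomial.eval v (w d)) *
        MvPolynomial.eval v q) x hG (e.hasFDerivAt)
  rw [pd, hF.fderiv]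
  have hsingle : e (EuclideanSpace.single l 1) = fun j => if j = l then 1 else 0 := by
    funext j
    show (EuclideanSpace.single l (1:ℝ)) j = _
    simp [EuclideanSpace.single_apply]
  rw [ContinuousLinearMap.comp_apply, hsingle]
  have hd1 : ∀ r : MvPolynomial (Fin d) ℝ,
      deval r v (fun j => if j = l then 1 else 0) = MvPolynomial.eval v (pderiv l r) := by
    intro r
    rw [deval_apply]
    simp [Finset.sum_ite_eq' Finset.univ l]
  simp only [ContinuousLinearMap.add_apply, ContinuousLinearMap.smul_apply, hd1, smul_eq_mul]
  rw [pderiv_w]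
  simp only [B, map_sub, eval_mul, eval_X, map_neg]
  ring

lemma gauss_eq :
    (fun y : EuclideanSpace ℝ (Fin d) => Real.exp (-‖y‖ ^ 2 / 2)) =
      fun y => Real.exp (MvPolynomial.eval (fun i => y i) (w d)) *
        MvPolynomial.eval (fun i => y i) (1 : MvPolynomial (Fin d) ℝ) := by
  funext y
  rw [map_one, mul_one, eval_w]
  congr 1
  rw [EuclideanSpace.norm_eq, Real.sq_sqrt (by positivity)]
  simp [Real.norm_eq_abs, sq_abs]

lemma pd_iter_gauss (l : Fin d) (k : ℕ) (q : MvPolynomial (Fin d) ℝ) :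
    (pd d l)^[k] (fun y => Real.exp (MvPolynomial.eval (fun i => y i) (w d)) *
        MvPolynomial.eval (fun i => y i) q) =
      fun y => Real.exp (MvPolynomial.eval (fun i => y i) (w d)) *
        MvPolynomial.eval (fun i => y i) ((B l)^[k] q) := by
  induction k generalizing q with
  | zero => rfl
  | succ k ih =>
    rw [Function.iterate_succ_apply, pd_gauss, ih, ← Function.iterate_succ_apply]

lemma foldr_pd_gauss (L : List (Fin d)) (s : Fin d →₀ ℕ) (q : MvPolynomial (Fin d) ℝ) :
    L.foldr (fun l g => (pd d l)^[s l] g)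
        (fun y => Real.exp (MvPolynomial.eval (fun i => y i) (w d)) *
          MvPolynomial.eval (fun i => y i) q) =
      fun y => Real.exp (MvPolynomial.eval (fun i => y i) (w d)) *
        MvPolynomial.eval (fun i => y i) (L.foldr (fun l r => (B l)^[s l] r) q) := by
  induction L with
  | nil => rfl
  | cons l L ih =>
    simp only [List.foldr_cons]
    rw [ih, pd_iter_gauss]

lemma peval_sum {α : Type*} (t : Finset α) (f : α → MvPolynomial (Fin d) ℝ)
    (x : EuclideanSpace ℝ (Fin d)) :
    peval d (∑ a ∈ t, f a) x = ∑ a ∈ t, peval d (f a) x := by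
  simp [peval, map_sum]

lemma peval_smul (a : ℝ) (r : MvPolynomial (Fin d) ℝ) (x : EuclideanSpace ℝ (Fin d)) :
    peval d (a • r) x = a * peval d r x := by
  simp [peval, smul_eval]

lemma Dmulti_gauss (s : Fin d →₀ ℕ) :
    Dmulti d s (fun y => Real.exp (-‖y‖ ^ 2 / 2)) =
      fun x : EuclideanSpace ℝ (Fin d) => Real.exp (-‖x‖ ^ 2 / 2) *
        ((-1 : ℝ) ^ (Finsupp.degree s) *
          ∑ j ∈ range (1 + Finsupp.degree s),
            cc j * peval d ((lapPoly d)^[j] (monomial s (1 : ℝ))) x) := by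
  have h0 : (lapPoly d)^[1] (1 : MvPolynomial (Fin d) ℝ) = 0 := by
    simp [lapPoly]
  have hfold := (fold_main (List.finRange d) s 1 1 h0).1
  rw [En_one_one, fold_X_eq_monomial, list_sum_eq_degree] at hfold
  rw [Dmulti, gauss_eq, foldr_pd_gauss, hfold]
  funext x
  have hexp : MvPolynomial.eval (fun i => x i) (w d) = -‖x‖ ^ 2 / 2 := by
    rw [eval_w]
    congr 1
    rw [EuclideanSpace.norm_eq, Real.sq_sqrt (by positivity)]
    simp [Real.norm_eq_abs, sq_abs]
  rw [hexp]
  congr 1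
  rw [show MvPolynomial.eval (fun i => x i)
        (((-1 : ℝ) ^ (Finsupp.degree s)) • En (1 + Finsupp.degree s) (monomial s (1:ℝ)))
      = peval d (((-1 : ℝ) ^ (Finsupp.degree s)) • En (1 + Finsupp.degree s) (monomial s (1:ℝ))) x
    from rfl]
  rw [peval_smul]
  congr 1
  rw [En, peval_sum]
  exact Finset.sum_congr rfl fun j _ => by simp [peval_smul]

end Hobson

open Hobson in
theorem hobson_gaussian (d m : ℕ) (p : MvPolynomial (Fin d) ℝ)
    (hp : p.IsHomogeneous m) (x : EuclideanSpace ℝ (Fin d)) :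
    polyOp d p (fun y => Real.exp (-‖y‖ ^ 2 / 2)) x =
      ∑ j ∈ range (m / 2 + 1),
        ((-1 : ℝ) ^ (m - j) / (2 ^ j * (Nat.factorial j))) * Real.exp (-‖x‖ ^ 2 / 2) *
          peval d ((lapPoly d)^[j] p) x := by
  classical
  have hdeg : ∀ s ∈ p.support, Finsupp.degree s = m := by
    intro s hs
    rw [Finsupp.degree_eq_weight_one]
    exact hp (MvPolynomial.mem_support_iff.mp hs)
  -- the common double sum
  set G : ℝ := Real.exp (-‖x‖ ^ 2 / 2) with hG
  have hplin : ∀ j : ℕ, (lapPoly d)^[j] p =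
      ∑ s ∈ p.support, p.coeff s • (lapPoly d)^[j] (monomial s (1 : ℝ)) := by
    intro j
    conv_lhs => rw [p.as_sum]
    rw [iter_sum]
    refine Finset.sum_congr rfl fun s _ => ?_
    rw [← iter_smul]
    congr 1
    rw [smul_monomial, smul_eq_mul, mul_one]
  -- LHS
  have hLHS : polyOp d p (fun y => Real.exp (-‖y‖ ^ 2 / 2)) x =
      ∑ j ∈ range (1 + m), ∑ s ∈ p.support,
        p.coeff s * ((-1 : ℝ) ^ m * cc j) * G *
          peval d ((lapPoly d)^[j] (monomial s (1 : ℝ))) x := by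
    rw [polyOp]
    rw [Finset.sum_comm]
    refine Finset.sum_congr rfl fun s hs => ?_
    rw [Dmulti_gauss]
    beta_reduce
    rw [hdeg s hs, ← hG]
    simp only [Finset.mul_sum]
    refine Finset.sum_congr rfl fun j _ => ?_
    ring
  -- RHS
  have hvanish : ∀ j ∈ range (1 + m), j ∉ range (m / 2 + 1) →
      ((-1 : ℝ) ^ (m - j) / (2 ^ j * (Nat.factorial j))) * G *
        peval d ((lapPoly d)^[j] p) x = 0 := by
    intro j _ hj2
    have hj3 : 2 * j > m := by
      simp only [Finset.mem_range] at hj2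
      omega
    rw [lap_iter_vanish hp hj3]
    simp [peval]
  have hRHS : (∑ j ∈ range (m / 2 + 1),
        ((-1 : ℝ) ^ (m - j) / (2 ^ j * (Nat.factorial j))) * G *
          peval d ((lapPoly d)^[j] p) x) =
      ∑ j ∈ range (1 + m), ∑ s ∈ p.support,
        p.coeff s * ((-1 : ℝ) ^ m * cc j) * G *
          peval d ((lapPoly d)^[j] (monomial s (1 : ℝ))) x := by
    rw [Finset.sum_subset (by intro j hj; simp only [Finset.mem_range] at *; omega) hvanish]
    refine Finset.sum_congr rfl fun j hj => ?_
    have hjm : j ≤ m := by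
      simp only [Finset.mem_range] at hj
      omega
    rw [cc_shift m j hjm, hplin j, peval_sum, Finset.mul_sum]
    refine Finset.sum_congr rfl fun s _ => ?_
    rw [peval_smul]
    ring
  rw [hLHS, hRHS]
end
end

section
/- A homogeneous polynomial p of degree m on ℝ^d is harmonic if and only if p(∂) e^{−‖x‖²/2} = p(−x) e^{−‖x‖²/2} for all x ∈ ℝ^d. -/
open Finset MvPolynomial Real

noncomputable section

variable {d : ℕ}

/-- derivative of polynomial evaluation -/
lemma hasFDerivAt_peval (q : MvPolynomial (Fin d) ℝ) (x : EuclideanSpace ℝ (Fin d)) :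
    HasFDerivAt (fun y => peval d q y)
      (∑ l, peval d (pderiv l q) x • (EuclideanSpace.proj l : EuclideanSpace ℝ (Fin d) →L[ℝ] ℝ)) x := by
  induction q using MvPolynomial.induction_on with
  | C a =>
      simp only [peval, eval_C, pderiv_C, map_zero, zero_smul, Finset.sum_const_zero]
      exact hasFDerivAt_const a x
  | add p q hp hq =>
      have := hp.add hq
      simp only [peval, map_add] at this ⊢
      refine this.congr_fderiv (Eq.symm ?_)
      rw [← Finset.sum_add_distrib]
      congr 1; ext l; rw [add_smul]
  | mul_X p l hp =>
      have hX : HasFDerivAt (fun y : EuclideanSpace ℝ (Fin d) => y l)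
          (EuclideanSpace.proj l : EuclideanSpace ℝ (Fin d) →L[ℝ] ℝ) x :=
        (EuclideanSpace.proj l : EuclideanSpace ℝ (Fin d) →L[ℝ] ℝ).hasFDerivAt
      have := hp.mul hX
      simp only [peval, map_mul, eval_X] at this ⊢
      refine this.congr_fderiv (Eq.symm ?_)
      rw [Finset.smul_sum]
      have : ∀ k : Fin d, (eval fun j => x j) (pderiv k (p * X l)) •
          (EuclideanSpace.proj k : EuclideanSpace ℝ (Fin d) →L[ℝ] ℝ)
          = (x l • ((eval fun j => x j) (pderiv k p) • (EuclideanSpace.proj k : EuclideanSpace ℝ (Fin d) →L[ℝ] ℝ)))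
            + (if k = l then (eval fun j => x j) p • (EuclideanSpace.proj k : EuclideanSpace ℝ (Fin d) →L[ℝ] ℝ) else 0) := by
        intro k
        rw [pderiv_mul, pderiv_X]
        by_cases h : k = l
        · subst h; simp [smul_smul, add_smul, mul_comm]
        · simp [h, Pi.single_eq_of_ne h, smul_smul, mul_comm]
      rw [Finset.sum_congr rfl (fun k _ => this k), Finset.sum_add_distrib,
        Finset.sum_ite_eq' Finset.univ l]
      simp [add_comm]

/-- weight polynomial whose evaluation is -‖x‖²/2 -/
def wpoly (d : ℕ) : MvPolynomial (Fin d) ℝ := C (-(1/2 : ℝ)) * ∑ i, X i ^ 2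

lemma peval_wpoly (x : EuclideanSpace ℝ (Fin d)) : peval d (wpoly d) x = -‖x‖ ^ 2 / 2 := by
  have h : ‖x‖ ^ 2 = ∑ i, x i ^ 2 := by
    rw [EuclideanSpace.norm_eq, Real.sq_sqrt (by positivity)]; simp [sq_abs]
  rw [h, peval, wpoly]
  simp only [map_mul, eval_C, map_sum, map_pow, eval_X]
  ring

lemma pderiv_wpoly (l : Fin d) : pderiv l (wpoly d) = - X l := by
  rw [wpoly, pderiv_C_mul, map_sum]
  have h1 : ∀ i : Fin d, i ∈ Finset.univ → pderiv l (X i ^ 2 : MvPolynomial (Fin d) ℝ)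
      = if i = l then 2 * X l else 0 := by
    intro i _
    rcases eq_or_ne i l with rfl | h
    · rw [pderiv_pow]; simp
    · rw [pderiv_pow]; simp [h]
  rw [Finset.sum_congr rfl h1, Finset.sum_ite_eq' Finset.univ l]
  simp only [if_pos (Finset.mem_univ l)]
  have h2 : (2 : MvPolynomial (Fin d) ℝ) = C 2 := (map_ofNat C 2).symm
  rw [h2, ← mul_assoc, ← C_mul]
  norm_num

/-- the key operator B -/
def Bop (d : ℕ) (l : Fin d) (q : MvPolynomial (Fin d) ℝ) : MvPolynomial (Fin d) ℝ :=
  pderiv l q - X l * q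

/-- key computation: pd of (eval q * gaussian) -/
lemma pd_peval_mul_exp (l : Fin d) (q : MvPolynomial (Fin d) ℝ) :
    pd d l (fun y => peval d q y * Real.exp (peval d (wpoly d) y))
      = fun y => peval d (Bop d l q) y * Real.exp (peval d (wpoly d) y) := by
  funext x
  have hq := hasFDerivAt_peval q x
  have hw := (hasFDerivAt_peval (wpoly d) x).exp
  have h : HasFDerivAt (fun y => peval d q y * Real.exp (peval d (wpoly d) y)) _ x := hq.mul hw
  rw [pd, h.fderiv]
  simp only [ContinuousLinearMap.add_apply, ContinuousLinearMap.smul_apply,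
    ContinuousLinearMap.coe_sum', Finset.sum_apply]
  have hproj : ∀ r : MvPolynomial (Fin d) ℝ,
      (∑ k, peval d (pderiv k r) x • (EuclideanSpace.proj k : EuclideanSpace ℝ (Fin d) →L[ℝ] ℝ)
        (EuclideanSpace.single l 1)) = peval d (pderiv l r) x := by
    intro r
    have h1 : ∀ k : Fin d, k ∈ Finset.univ → peval d (pderiv k r) x •
        (EuclideanSpace.proj k : EuclideanSpace ℝ (Fin d) →L[ℝ] ℝ) (EuclideanSpace.single l 1)
        = if k = l then peval d (pderiv l r) x else 0 := by
      intro k _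
      have : (EuclideanSpace.proj k : EuclideanSpace ℝ (Fin d) →L[ℝ] ℝ)
          (EuclideanSpace.single l 1) = if k = l then (1:ℝ) else 0 := by
        rw [show (EuclideanSpace.proj k : EuclideanSpace ℝ (Fin d) →L[ℝ] ℝ)
            (EuclideanSpace.single l 1) = (EuclideanSpace.single l (1:ℝ)) k from rfl,
          EuclideanSpace.single_apply]
      rcases eq_or_ne k l with rfl | hkl
      · simp [this]
      · simp [this, hkl]
    rw [Finset.sum_congr rfl h1, Finset.sum_ite_eq' Finset.univ l]
    simp
  rw [hproj q, hproj (wpoly d)]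
  rw [pderiv_wpoly]
  simp only [Bop, peval, map_sub, map_mul, map_neg, eval_X, smul_eq_mul]
  ring

def Bmulti (d : ℕ) (s : Fin d →₀ ℕ) (q : MvPolynomial (Fin d) ℝ) : MvPolynomial (Fin d) ℝ :=
  (List.finRange d).foldr (fun l r => (Bop d l)^[s l] r) q

lemma pd_iter_peval (l : Fin d) (n : ℕ) :
    ∀ q : MvPolynomial (Fin d) ℝ,
    (pd d l)^[n] (fun y => peval d q y * Real.exp (peval d (wpoly d) y))
      = fun y => peval d ((Bop d l)^[n] q) y * Real.exp (peval d (wpoly d) y) := by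
  induction n with
  | zero => intro q; rfl
  | succ n ih =>
      intro q
      rw [Function.iterate_succ_apply, Function.iterate_succ_apply,
        pd_peval_mul_exp, ih]

lemma foldr_peval (L : List (Fin d)) (s : Fin d →₀ ℕ) :
    ∀ q : MvPolynomial (Fin d) ℝ,
    L.foldr (fun l g => (pd d l)^[s l] g) (fun y => peval d q y * Real.exp (peval d (wpoly d) y))
      = fun y => peval d (L.foldr (fun l r => (Bop d l)^[s l] r) q) y
          * Real.exp (peval d (wpoly d) y) := by
  induction L with
  | nil => intro q; rfl
  | cons a L ih =>
      intro q
      rw [List.foldr_cons, ih, pd_iter_peval, List.foldr_cons]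

lemma Dmulti_gauss (s : Fin d →₀ ℕ) :
    Dmulti d s (fun y => Real.exp (-‖y‖ ^ 2 / 2))
      = fun y => peval d (Bmulti d s 1) y * Real.exp (peval d (wpoly d) y) := by
  have hG : (fun y : EuclideanSpace ℝ (Fin d) => Real.exp (-‖y‖ ^ 2 / 2))
      = fun y => peval d (1 : MvPolynomial (Fin d) ℝ) y * Real.exp (peval d (wpoly d) y) := by
    funext y; rw [peval_wpoly]; simp [peval]
  rw [Dmulti, hG, foldr_peval, Bmulti]


def Herm (d : ℕ) (p : MvPolynomial (Fin d) ℝ) : MvPolynomial (Fin d) ℝ :=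
  ∑ s ∈ p.support, MvPolynomial.coeff s p • Bmulti d s 1

lemma polyOp_gauss (p : MvPolynomial (Fin d) ℝ) (x : EuclideanSpace ℝ (Fin d)) :
    polyOp d p (fun y => Real.exp (-‖y‖ ^ 2 / 2)) x
      = peval d (Herm d p) x * Real.exp (-‖x‖ ^ 2 / 2) := by
  rw [polyOp, Herm, ← peval_wpoly x]
  rw [peval, map_sum]
  rw [Finset.sum_mul, Finset.sum_congr rfl (fun s _ => ?_)]
  rw [Dmulti_gauss s, smul_eval]
  show MvPolynomial.coeff s p * (peval d (Bmulti d s 1) x * Real.exp (peval d (wpoly d) x))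
    = MvPolynomial.coeff s p * (eval fun l => x l) (Bmulti d s 1) * Real.exp (peval d (wpoly d) x)
  rw [peval]; ring

lemma bop_add (l : Fin d) (q r : MvPolynomial (Fin d) ℝ) :
    Bop d l (q + r) = Bop d l q + Bop d l r := by
  simp only [Bop, map_add]; ring

lemma bop_smul (l : Fin d) (c : ℝ) (q : MvPolynomial (Fin d) ℝ) :
    Bop d l (c • q) = c • Bop d l q := by
  simp only [Bop, mul_smul_comm, smul_sub]
  rw [Derivation.map_smul]

lemma pderiv_pderiv_comm (i j : Fin d) (q : MvPolynomial (Fin d) ℝ) :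
    pderiv i (pderiv j q) = pderiv j (pderiv i q) := by
  induction q using MvPolynomial.induction_on with
  | C a => simp [pderiv_C]
  | add p q hp hq => simp only [map_add, hp, hq]
  | mul_X p l hp =>
      have e : ∀ (a b : Fin d), pderiv a (X b : MvPolynomial (Fin d) ℝ) = if b = a then 1 else 0 := by
        intro a b
        rcases eq_or_ne b a with rfl | h
        · simp
        · simp [h]
      simp only [pderiv_mul, map_add, e, hp, apply_ite (pderiv i), apply_ite (pderiv j),
        pderiv_one, map_zero, ite_self, mul_zero, zero_mul, add_zero, zero_add, mul_one, one_mul]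
      split_ifs <;> first | ring | rfl

lemma bop_comm (k l : Fin d) (q : MvPolynomial (Fin d) ℝ) :
    Bop d k (Bop d l q) = Bop d l (Bop d k q) := by
  simp only [Bop, map_sub, pderiv_mul, pderiv_pderiv_comm k l q]
  rcases eq_or_ne k l with rfl | h
  · ring
  · rw [pderiv_X_of_ne h, pderiv_X_of_ne (Ne.symm h)]; ring

lemma bop_fun_comm (k l : Fin d) : Function.Commute (Bop d k) (Bop d l) :=
  fun q => bop_comm k l q


lemma bop_zero (l : Fin d) : Bop d l 0 = 0 := by simp [Bop]

lemma bop_sum {ι : Type*} (l : Fin d) (T : Finset ι) (f : ι → MvPolynomial (Fin d) ℝ) :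
    Bop d l (∑ s ∈ T, f s) = ∑ s ∈ T, Bop d l (f s) := by
  classical
  induction T using Finset.induction_on with
  | empty => simp [bop_zero]
  | insert _ _ hnot ih => rw [Finset.sum_insert hnot, Finset.sum_insert hnot, bop_add, ih]

lemma foldr_bop_single (s : Fin d →₀ ℕ) (l : Fin d) (L : List (Fin d)) :
    l ∈ L → L.Nodup → ∀ q : MvPolynomial (Fin d) ℝ,
    L.foldr (fun k r => (Bop d k)^[((s + Finsupp.single l 1 : Fin d →₀ ℕ)) k] r) q
      = Bop d l (L.foldr (fun k r => (Bop d k)^[s k] r) q) := by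
  induction L with
  | nil => intro h; cases h
  | cons a L ih =>
      intro hmem hnd q
      rw [List.foldr_cons, List.foldr_cons]
      rcases eq_or_ne a l with rfl | ha
      · have hnotin : a ∉ L := (List.nodup_cons.mp hnd).1
        have he : L.foldr (fun k r => (Bop d k)^[((s + Finsupp.single a 1 : Fin d →₀ ℕ)) k] r) q
            = L.foldr (fun k r => (Bop d k)^[s k] r) q := by
          apply List.foldr_ext
          intro k hk b
          have hka : k ≠ a := fun h => hnotin (h ▸ hk)
          rw [Finsupp.add_apply, Finsupp.single_apply, if_neg (fun h => hka h.symm), add_zero]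
        rw [he, Finsupp.add_apply, Finsupp.single_apply, if_pos rfl,
          Function.iterate_succ_apply']
      · have hmem' : l ∈ L := by
          rcases List.mem_cons.mp hmem with h | h
          · exact absurd h.symm ha
          · exact h
        rw [ih hmem' (List.nodup_cons.mp hnd).2 q]
        rw [show ((s + Finsupp.single l 1 : Fin d →₀ ℕ)) a = s a by
          rw [Finsupp.add_apply, Finsupp.single_apply, if_neg (fun h => ha h.symm), add_zero]]
        exact ((bop_fun_comm a l).iterate_left (s a)) _

lemma bmulti_add_single (s : Fin d →₀ ℕ) (l : Fin d) (q : MvPolynomial (Fin d) ℝ) :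
    Bmulti d (s + Finsupp.single l 1) q = Bop d l (Bmulti d s q) :=
  foldr_bop_single s l (List.finRange d) (List.mem_finRange l) (List.nodup_finRange d) q

lemma herm_eq_sum {p : MvPolynomial (Fin d) ℝ} {T : Finset (Fin d →₀ ℕ)} (h : p.support ⊆ T) :
    Herm d p = ∑ s ∈ T, MvPolynomial.coeff s p • Bmulti d s 1 :=
  Finset.sum_subset h (fun s _ hs => by
    rw [of_not_not (fun hc => hs (MvPolynomial.mem_support_iff.mpr hc)), zero_smul])

lemma herm_add (p q : MvPolynomial (Fin d) ℝ) : Herm d (p + q) = Herm d p + Herm d q := by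
  classical
  rw [herm_eq_sum (T := p.support ∪ q.support ∪ (p+q).support) (by intro s hs; exact Finset.mem_union_right _ hs),
    herm_eq_sum (T := p.support ∪ q.support ∪ (p+q).support)
      (by intro s hs; exact Finset.mem_union_left _ (Finset.mem_union_left _ hs)),
    herm_eq_sum (T := p.support ∪ q.support ∪ (p+q).support)
      (by intro s hs; exact Finset.mem_union_left _ (Finset.mem_union_right _ hs)),
    ← Finset.sum_add_distrib]
  apply Finset.sum_congr rfl
  intro s _
  rw [MvPolynomial.coeff_add, add_smul]

lemma herm_zero : Herm d 0 = 0 := by simp [Herm]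

lemma herm_neg (p : MvPolynomial (Fin d) ℝ) : Herm d (-p) = - Herm d p := by
  have h2 := herm_add p (-p)
  rw [add_neg_cancel, herm_zero] at h2
  exact eq_neg_of_add_eq_zero_right h2.symm

lemma bmulti_zero (q : MvPolynomial (Fin d) ℝ) : Bmulti d 0 q = q := by
  rw [Bmulti, List.foldr_ext _ (fun _ r => r) q (by intro a _ b; simp), List.foldr_fixed]

lemma herm_C (a : ℝ) : Herm d (C a) = C a := by
  rcases eq_or_ne a 0 with rfl | h
  · rw [map_zero, herm_zero]
  · rw [Herm, C_apply, support_monomial, if_neg h, Finset.sum_singleton, bmulti_zero,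
      coeff_monomial, if_pos rfl, smul_eq_C_mul, mul_one]
    exact C_apply

lemma herm_mul_X (p : MvPolynomial (Fin d) ℝ) (l : Fin d) :
    Herm d (p * X l) = Bop d l (Herm d p) := by
  rw [Herm, support_mul_X, Finset.sum_map, Herm, bop_sum]
  apply Finset.sum_congr rfl
  intro s _
  rw [addRightEmbedding_apply, MvPolynomial.coeff_mul_X, bmulti_add_single, bop_smul]


lemma lapPoly_add (p q : MvPolynomial (Fin d) ℝ) :
    lapPoly d (p + q) = lapPoly d p + lapPoly d q := by
  simp only [lapPoly, map_add, Finset.sum_add_distrib]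

lemma lapPoly_smul (c : ℝ) (p : MvPolynomial (Fin d) ℝ) :
    lapPoly d (c • p) = c • lapPoly d p := by
  simp only [lapPoly, Derivation.map_smul, Finset.smul_sum]

lemma lapPoly_zero : lapPoly d 0 = 0 := by simp [lapPoly]

lemma lap_iter_add (j : ℕ) (p q : MvPolynomial (Fin d) ℝ) :
    (lapPoly d)^[j] (p + q) = (lapPoly d)^[j] p + (lapPoly d)^[j] q := by
  induction j generalizing p q with
  | zero => rfl
  | succ j ih => rw [Function.iterate_succ_apply, Function.iterate_succ_apply,
      Function.iterate_succ_apply, lapPoly_add, ih]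

lemma lap_iter_smul (j : ℕ) (c : ℝ) (p : MvPolynomial (Fin d) ℝ) :
    (lapPoly d)^[j] (c • p) = c • (lapPoly d)^[j] p := by
  induction j generalizing p with
  | zero => rfl
  | succ j ih => rw [Function.iterate_succ_apply, Function.iterate_succ_apply,
      lapPoly_smul, ih]

lemma lap_iter_zero (j : ℕ) : (lapPoly d)^[j] (0 : MvPolynomial (Fin d) ℝ) = 0 := by
  induction j with
  | zero => rfl
  | succ j ih => rw [Function.iterate_succ_apply, lapPoly_zero, ih]

lemma pderiv_lapPoly (l : Fin d) (q : MvPolynomial (Fin d) ℝ) :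
    pderiv l (lapPoly d q) = lapPoly d (pderiv l q) := by
  rw [lapPoly, lapPoly, map_sum]
  apply Finset.sum_congr rfl
  intro k _
  rw [pderiv_pderiv_comm l k (pderiv k q), pderiv_pderiv_comm l k q]

lemma pderiv_lap_iter (l : Fin d) (j : ℕ) (q : MvPolynomial (Fin d) ℝ) :
    pderiv l ((lapPoly d)^[j] q) = (lapPoly d)^[j] (pderiv l q) := by
  induction j generalizing q with
  | zero => rfl
  | succ j ih => rw [Function.iterate_succ_apply, Function.iterate_succ_apply, ih, pderiv_lapPoly]

lemma degree_sub_single (s : Fin d →₀ ℕ) (i : Fin d) (h : s i ≠ 0) :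
    (((s - Finsupp.single i 1 : Fin d →₀ ℕ)).sum fun _ e => e) + 1 = s.sum fun _ e => e := by
  have hs : (s - Finsupp.single i 1 : Fin d →₀ ℕ) + Finsupp.single i 1 = s := by
    ext j
    rcases eq_or_ne j i with rfl | hj
    · simp only [Finsupp.add_apply, Finsupp.tsub_apply, Finsupp.single_eq_same]
      omega
    · simp only [Finsupp.add_apply, Finsupp.tsub_apply, Finsupp.single_eq_of_ne' (Ne.symm hj)]
      omega
  conv_rhs => rw [← hs]
  rw [Finsupp.sum_add_index' (fun _ => rfl) (fun _ _ _ => rfl),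
    Finsupp.sum_single_index rfl]

lemma td_pderiv (i : Fin d) (q : MvPolynomial (Fin d) ℝ) (k : ℕ)
    (h : q.totalDegree ≤ k + 1) : (pderiv i q).totalDegree ≤ k := by
  conv_lhs => rw [q.as_sum, map_sum]
  refine le_trans (totalDegree_finset_sum _ _) (Finset.sup_le ?_)
  intro s hs
  rw [pderiv_monomial]
  rcases eq_or_ne (s i) 0 with h0 | h0
  · rw [h0]
    simp
  · refine le_trans (totalDegree_monomial_le _ _) ?_
    have h1 : (s.sum fun _ e => e) ≤ k + 1 := le_trans (le_totalDegree hs) h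
    have h2 := degree_sub_single s i h0
    have h4 : (((s - Finsupp.single i 1 : Fin d →₀ ℕ)).sum fun _ => id)
        = (((s - Finsupp.single i 1 : Fin d →₀ ℕ)).sum fun _ e => e) := rfl
    omega

lemma td_lap (q : MvPolynomial (Fin d) ℝ) (k : ℕ)
    (h : q.totalDegree ≤ k + 2) : (lapPoly d q).totalDegree ≤ k := by
  rw [lapPoly]
  refine le_trans (totalDegree_finset_sum _ _) (Finset.sup_le ?_)
  intro l _
  exact td_pderiv l _ k (td_pderiv l q (k+1) h)

lemma pderiv_td_zero (i : Fin d) (r : MvPolynomial (Fin d) ℝ) (h : r.totalDegree = 0) :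
    pderiv i r = 0 := by
  conv_lhs => rw [r.as_sum, map_sum]
  apply Finset.sum_eq_zero
  intro s hs
  have h1 : (s.sum fun _ e => e) = 0 := Nat.le_zero.mp (h ▸ le_totalDegree hs)
  have h0 : s i = 0 := by
    have h2 : s i ≤ Finsupp.degree s := Finsupp.le_degree i s
    have h3 : Finsupp.degree s = s.sum fun _ e => e := rfl
    omega
  rw [pderiv_monomial, h0]
  simp

lemma lap_iter_vanish (j : ℕ) (q : MvPolynomial (Fin d) ℝ)
    (h : q.totalDegree < 2 * j) : (lapPoly d)^[j] q = 0 := by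
  induction j generalizing q with
  | zero => omega
  | succ j ih =>
      rw [Function.iterate_succ_apply]
      rcases Nat.eq_zero_or_pos j with rfl | hj
      · have hq : q.totalDegree ≤ 1 := by omega
        have hlap : lapPoly d q = 0 := by
          rw [lapPoly]
          apply Finset.sum_eq_zero
          intro k _
          exact pderiv_td_zero k _ (Nat.le_zero.mp (td_pderiv k q 0 hq))
        rw [hlap]
        exact lap_iter_zero 0
      · apply ih
        have : (lapPoly d q).totalDegree ≤ 2 * j - 1 := by
          apply td_lap
          omega
        omega


def pneg (d : ℕ) (p : MvPolynomial (Fin d) ℝ) : MvPolynomial (Fin d) ℝ :=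
  aeval (fun i => - X i) p

lemma pneg_def (p : MvPolynomial (Fin d) ℝ) : pneg d p = aeval (fun i => - X i) p := rfl

lemma pneg_add (p q : MvPolynomial (Fin d) ℝ) : pneg d (p + q) = pneg d p + pneg d q :=
  map_add _ p q

lemma pneg_mul (p q : MvPolynomial (Fin d) ℝ) : pneg d (p * q) = pneg d p * pneg d q :=
  map_mul _ p q

lemma pneg_neg (p : MvPolynomial (Fin d) ℝ) : pneg d (-p) = - pneg d p :=
  map_neg _ p

lemma pneg_zero : pneg d 0 = 0 := map_zero _

lemma pneg_one : pneg d 1 = 1 := map_one _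

lemma pneg_X (l : Fin d) : pneg d (X l) = - X l := aeval_X _ l

lemma pneg_C (a : ℝ) : pneg d (C a) = C a := by
  rw [pneg_def, aeval_C]; rfl

lemma pneg_smul (c : ℝ) (p : MvPolynomial (Fin d) ℝ) : pneg d (c • p) = c • pneg d p := by
  rw [smul_eq_C_mul, pneg_mul, pneg_C, smul_eq_C_mul]

lemma pneg_pneg (p : MvPolynomial (Fin d) ℝ) : pneg d (pneg d p) = p := by
  induction p using MvPolynomial.induction_on with
  | C a => rw [pneg_C, pneg_C]
  | add p q hp hq => rw [pneg_add, pneg_add, hp, hq]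
  | mul_X p l hp =>
      rw [pneg_mul, pneg_X, mul_neg, pneg_neg, pneg_mul, pneg_X, hp, mul_neg, neg_neg]

lemma pderiv_pneg (l : Fin d) (p : MvPolynomial (Fin d) ℝ) :
    pderiv l (pneg d p) = - pneg d (pderiv l p) := by
  induction p using MvPolynomial.induction_on with
  | C a => rw [pneg_C, pderiv_C, pneg_zero, neg_zero]
  | add p q hp hq => rw [pneg_add, map_add, hp, hq, map_add, pneg_add]; ring
  | mul_X p k hp =>
      rw [pneg_mul, pneg_X, pderiv_mul, hp, pderiv_mul, pneg_add, pneg_mul, pneg_mul,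
        pneg_X, map_neg]
      rcases eq_or_ne l k with rfl | h
      · rw [pderiv_X_self, pneg_one]; ring
      · rw [pderiv_X_of_ne (Ne.symm h), pneg_zero]; ring

lemma lap_pneg (p : MvPolynomial (Fin d) ℝ) : lapPoly d (pneg d p) = pneg d (lapPoly d p) := by
  rw [lapPoly, lapPoly]
  conv_rhs => rw [pneg_def, map_sum]
  apply Finset.sum_congr rfl
  intro k _
  rw [pderiv_pneg, map_neg, pderiv_pneg, neg_neg, pneg_def]

lemma lap_iter_pneg (j : ℕ) (p : MvPolynomial (Fin d) ℝ) :
    (lapPoly d)^[j] (pneg d p) = pneg d ((lapPoly d)^[j] p) := by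
  induction j generalizing p with
  | zero => rfl
  | succ j ih => rw [Function.iterate_succ_apply, Function.iterate_succ_apply, lap_pneg, ih]

lemma peval_pneg (p : MvPolynomial (Fin d) ℝ) (x : EuclideanSpace ℝ (Fin d)) :
    peval d (pneg d p) x = peval d p (-x) := by
  induction p using MvPolynomial.induction_on with
  | C a => rw [pneg_C]; simp [peval]
  | add p q hp hq =>
      rw [peval, pneg_add, map_add, ← peval, ← peval, hp, hq, peval, peval, peval, ← map_add]
  | mul_X p l hp =>
      rw [peval, pneg_mul, pneg_X, map_mul, map_neg, eval_X, ← peval, hp]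
      show _ = eval (fun k => (-x : EuclideanSpace ℝ (Fin d)) k) (p * X l)
      rw [map_mul, eval_X, ← peval]
      rfl


def cgauss : ℕ → ℝ := fun j => (-1)^j / (2^j * j.factorial)

lemma cgauss_zero : cgauss 0 = 1 := by norm_num [cgauss]

lemma cgauss_one : cgauss 1 = -(1/2) := by norm_num [cgauss]

lemma cgauss_succ (j : ℕ) : cgauss (j+1) * (2*(j+1)) = - cgauss j := by
  have hf : (j.factorial : ℝ) ≠ 0 := Nat.cast_ne_zero.mpr (Nat.factorial_ne_zero j)
  have h2 : (2:ℝ)^j ≠ 0 := pow_ne_zero _ two_ne_zero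
  have hj1 : (j:ℝ) + 1 ≠ 0 := by positivity
  rw [cgauss, cgauss, pow_succ, pow_succ, Nat.factorial_succ]
  push_cast
  field_simp

def Phi (d : ℕ) (N : ℕ) (p : MvPolynomial (Fin d) ℝ) : MvPolynomial (Fin d) ℝ :=
  ∑ j ∈ Finset.range N, cgauss j • (lapPoly d)^[j] p

lemma phi_add (N : ℕ) (p q : MvPolynomial (Fin d) ℝ) :
    Phi d N (p + q) = Phi d N p + Phi d N q := by
  rw [Phi, Phi, Phi, ← Finset.sum_add_distrib]
  apply Finset.sum_congr rfl
  intro j _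
  rw [lap_iter_add, smul_add]

lemma phi_stab {q : MvPolynomial (Fin d) ℝ} {N M : ℕ} (h1 : q.totalDegree ≤ N) (h2 : N ≤ M) :
    Phi d (N+1) q = Phi d (M+1) q := by
  apply Finset.sum_subset (Finset.range_subset_range.mpr (by omega))
  intro j hj hj'
  rw [Finset.mem_range] at hj
  rw [Finset.mem_range, not_lt] at hj'
  rw [lap_iter_vanish j q (by omega), smul_zero]

lemma pderiv_phi (l : Fin d) (N : ℕ) (p : MvPolynomial (Fin d) ℝ) :
    pderiv l (Phi d N p) = Phi d N (pderiv l p) := by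
  rw [Phi, Phi, map_sum]
  apply Finset.sum_congr rfl
  intro j _
  rw [Derivation.map_smul, pderiv_lap_iter]

lemma lap_X_mul (l : Fin d) (q : MvPolynomial (Fin d) ℝ) :
    lapPoly d (X l * q) = X l * lapPoly d q + (pderiv l q + pderiv l q) := by
  rw [lapPoly, lapPoly, Finset.mul_sum]
  have key : ∀ k : Fin d, pderiv k (pderiv k (X l * q)) = X l * pderiv k (pderiv k q)
      + (if k = l then pderiv l q + pderiv l q else 0) := by
    intro k
    rcases eq_or_ne k l with rfl | h
    · rw [pderiv_mul, pderiv_X_self, one_mul, map_add, pderiv_mul, pderiv_X_self, one_mul,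
        if_pos rfl]
      ring
    · rw [pderiv_mul, pderiv_X_of_ne (Ne.symm h), zero_mul, zero_add, pderiv_mul,
        pderiv_X_of_ne (Ne.symm h), zero_mul, zero_add, if_neg h, add_zero]
  rw [Finset.sum_congr rfl (fun k _ => key k), Finset.sum_add_distrib,
    Finset.sum_ite_eq' Finset.univ l]
  rw [if_pos (Finset.mem_univ l)]

lemma lap_iter_X_mul (l : Fin d) (j : ℕ) (q : MvPolynomial (Fin d) ℝ) :
    (lapPoly d)^[j+1] (X l * q) = X l * (lapPoly d)^[j+1] q
      + ((2*(j+1) : ℕ) : ℝ) • (lapPoly d)^[j] (pderiv l q) := by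
  induction j generalizing q with
  | zero =>
      rw [Function.iterate_one, lap_X_mul]
      congr 1
      push_cast
      rw [Function.iterate_zero_apply, two_smul]
  | succ j ih =>
      rw [Function.iterate_succ_apply, lap_X_mul, lap_iter_add, lap_iter_add, ih]
      rw [pderiv_lapPoly l q,
        ← Function.iterate_succ_apply (lapPoly d) j (pderiv l q),
        ← Function.iterate_succ_apply (lapPoly d) (j+1) q]
      have harith : ((2*(j+1+1) : ℕ) : ℝ) = ((2*(j+1) : ℕ) : ℝ) + 1 + 1 := by push_cast; ring
      rw [harith, add_smul, add_smul, one_smul]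
      abel

lemma phi_X_mul (l : Fin d) (p : MvPolynomial (Fin d) ℝ) (K : ℕ)
    (h2K : p.totalDegree < 2*K) :
    Phi d (K+1) (X l * p) = X l * Phi d (K+1) p - pderiv l (Phi d (K+1) p) := by
  rw [pderiv_phi]
  rw [Phi, Finset.sum_range_succ' _ K]
  have hf0 : cgauss 0 • ((lapPoly d)^[0] (X l * p)) = X l * p := by
    rw [cgauss_zero, one_smul, Function.iterate_zero_apply]
  rw [hf0]
  have hterm : ∀ j, cgauss (j+1) • ((lapPoly d)^[j+1] (X l * p))
      = X l * (cgauss (j+1) • (lapPoly d)^[j+1] p) - cgauss j • (lapPoly d)^[j] (pderiv l p) := by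
    intro j
    rw [lap_iter_X_mul, smul_add, mul_smul_comm, smul_smul]
    have : cgauss (j+1) * ((2*(j+1) : ℕ) : ℝ) = - cgauss j := by
      rw [← cgauss_succ j]; push_cast; ring
    rw [this, neg_smul]
    ring
  rw [Finset.sum_congr rfl (fun j _ => hterm j), Finset.sum_sub_distrib]
  have hsum1 : (∑ j ∈ Finset.range K, X l * (cgauss (j+1) • (lapPoly d)^[j+1] p)) + X l * p
      = X l * Phi d (K+1) p := by
    rw [Phi, Finset.sum_range_succ' _ K, cgauss_zero, one_smul, Function.iterate_zero_apply,
      mul_add, Finset.mul_sum]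
  have hsum2 : (∑ j ∈ Finset.range K, cgauss j • (lapPoly d)^[j] (pderiv l p))
      = Phi d (K+1) (pderiv l p) := by
    rw [Phi, Finset.sum_range_succ]
    have hv : (lapPoly d)^[K] (pderiv l p) = 0 := by
      apply lap_iter_vanish
      have := td_pderiv l p p.totalDegree (by omega)
      omega
    rw [hv, smul_zero, add_zero]
  rw [← hsum1, ← hsum2]
  ring


lemma herm_pneg_eq_phi (p : MvPolynomial (Fin d) ℝ) :
    ∀ N : ℕ, p.totalDegree ≤ N → Herm d (pneg d p) = Phi d (N+1) p := by
  induction p using MvPolynomial.induction_on with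
  | C a =>
      intro N hN
      rw [pneg_C, herm_C, Phi, Finset.sum_eq_single 0]
      · rw [cgauss_zero, one_smul, Function.iterate_zero_apply]
      · intro j hj hj0
        rw [lap_iter_vanish j _ (by rw [totalDegree_C]; omega), smul_zero]
      · intro h
        exact absurd (Finset.mem_range.mpr (by omega)) h
  | add p q hp hq =>
      intro N hN
      have hM1 : p.totalDegree ≤ max N (max p.totalDegree q.totalDegree) := by omega
      have hM2 : q.totalDegree ≤ max N (max p.totalDegree q.totalDegree) := by omega
      rw [pneg_add, herm_add, hp _ hM1, hq _ hM2, ← phi_add,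
        ← phi_stab (N := N) (M := max N (max p.totalDegree q.totalDegree)) (q := p + q)
          hN (le_max_left _ _)]
  | mul_X p l hp =>
      intro N hN
      have hK : p.totalDegree + 1 ≤ max N (p.totalDegree + 1) := le_max_right _ _
      have h2K : p.totalDegree < 2 * max N (p.totalDegree + 1) := by omega
      have hHp := hp (max N (p.totalDegree + 1)) (by omega)
      have hpm : pneg d (p * X l) = -(pneg d p * X l) := by
        rw [pneg_mul, pneg_X, mul_neg]
      rw [hpm, herm_neg, herm_mul_X, hHp]
      rw [phi_stab (N := N) (M := max N (p.totalDegree + 1)) hN (le_max_left _ _),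
        mul_comm p (X l), phi_X_mul l p _ h2K, Bop]
      ring

lemma isHomogeneous_pderiv {r : MvPolynomial (Fin d) ℝ} {n : ℕ} (h : r.IsHomogeneous n)
    (i : Fin d) : (pderiv i r).IsHomogeneous (n - 1) := by
  have hr : pderiv i r
      = ∑ s ∈ r.support, monomial (s - Finsupp.single i 1) (coeff s r * (s i : ℝ)) := by
    conv_lhs => rw [r.as_sum]
    rw [map_sum]
    exact Finset.sum_congr rfl fun s _ => pderiv_monomial
  rw [hr]
  apply IsHomogeneous.sum
  intro s hs
  rcases eq_or_ne (s i) 0 with h0 | h0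
  · rw [h0, Nat.cast_zero, mul_zero, map_zero]
    exact isHomogeneous_zero _ _ _
  · apply isHomogeneous_monomial
    have hd : Finsupp.degree s = n := by
      have h1 := h (MvPolynomial.mem_support_iff.mp hs)
      rw [Finsupp.degree_eq_weight_one]
      exact h1
    have h2 := degree_sub_single s i h0
    have h3 : Finsupp.degree (s - Finsupp.single i 1 : Fin d →₀ ℕ)
        = ((s - Finsupp.single i 1 : Fin d →₀ ℕ).sum fun _ e => e) := rfl
    have h4 : Finsupp.degree s = (s.sum fun _ e => e) := rfl
    omega

lemma isHomogeneous_lap {r : MvPolynomial (Fin d) ℝ} {n : ℕ} (h : r.IsHomogeneous n) :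
    (lapPoly d r).IsHomogeneous (n - 2) := by
  rw [lapPoly]
  apply IsHomogeneous.sum
  intro k _
  have := isHomogeneous_pderiv (isHomogeneous_pderiv h k) k
  rwa [show n - 1 - 1 = n - 2 by omega] at this

lemma isHomogeneous_lap_iter {r : MvPolynomial (Fin d) ℝ} {n : ℕ} (h : r.IsHomogeneous n)
    (j : ℕ) : ((lapPoly d)^[j] r).IsHomogeneous (n - 2*j) := by
  induction j generalizing r n with
  | zero => simpa using h
  | succ j ih =>
      rw [Function.iterate_succ_apply]
      have := ih (isHomogeneous_lap h)
      rwa [show n - 2 - 2*j = n - 2*(j+1) by omega] at this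


lemma pneg_phi (N : ℕ) (q : MvPolynomial (Fin d) ℝ) :
    pneg d (Phi d N q) = Phi d N (pneg d q) := by
  rw [Phi, Phi, pneg_def, map_sum]
  apply Finset.sum_congr rfl
  intro j _
  rw [← pneg_def, pneg_smul, ← lap_iter_pneg]

theorem harmonic_iff_gaussian_eigen (d m : ℕ) (p : MvPolynomial (Fin d) ℝ)
    (hp : p.IsHomogeneous m) :
    lapPoly d p = 0 ↔
      ∀ x : EuclideanSpace ℝ (Fin d),
        polyOp d p (fun y => Real.exp (-‖y‖ ^ 2 / 2)) x =
          peval d p (-x) * Real.exp (-‖x‖ ^ 2 / 2) := by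
  set N0 := (pneg d p).totalDegree + m + 5 with hN0
  have hmain : Herm d p = Phi d (N0 + 1) (pneg d p) := by
    have := herm_pneg_eq_phi (pneg d p) N0 (by omega)
    rwa [pneg_pneg] at this
  constructor
  · intro hlap
    have h0 : lapPoly d (pneg d p) = 0 := by rw [lap_pneg, hlap, pneg_zero]
    have hphi0 : Phi d (N0 + 1) (pneg d p) = pneg d p := by
      rw [Phi, Finset.sum_eq_single 0]
      · rw [cgauss_zero, one_smul, Function.iterate_zero_apply]
      · intro j hj hj0
        obtain ⟨k, rfl⟩ := Nat.exists_eq_succ_of_ne_zero hj0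
        rw [Function.iterate_succ_apply, h0, lap_iter_zero, smul_zero]
      · intro h
        exact absurd (Finset.mem_range.mpr (by omega)) h
    have hH : Herm d p = pneg d p := hmain.trans hphi0
    intro x
    rw [polyOp_gauss, hH, peval_pneg]
  · intro h
    have hHerm : Herm d p = pneg d p := by
      apply MvPolynomial.funext
      intro y
      have hx := h (WithLp.toLp 2 y)
      rw [polyOp_gauss] at hx
      have hexp : Real.exp (-‖(WithLp.toLp 2 y)‖ ^ 2 / 2) ≠ 0 :=
        Real.exp_ne_zero _
      have h2 := mul_right_cancel₀ hexp hx
      rw [← peval_pneg] at h2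
      exact h2
    have hphi : Phi d (N0 + 1) (pneg d p) = pneg d p := hmain.symm.trans hHerm
    have hP : Phi d (N0 + 1) p = p := by
      have h3 := congrArg (pneg d) hphi
      rw [pneg_phi, pneg_pneg] at h3
      exact h3
    rcases eq_or_ne p 0 with rfl | hp0
    · rw [lapPoly_zero]
    have htd : p.totalDegree = m := hp.totalDegree hp0
    rcases lt_or_ge m 2 with hm | hm
    · have := lap_iter_vanish 1 p (by omega)
      rwa [Function.iterate_one] at this
    · have hsplit : (∑ j ∈ Finset.range N0, cgauss (j+1) • (lapPoly d)^[j+1] p) = 0 := by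
        rw [Phi, Finset.sum_range_succ' _ N0, cgauss_zero, one_smul,
          Function.iterate_zero_apply] at hP
        exact add_eq_right.mp hP
      have hcomp := congrArg (homogeneousComponent (m-2)) hsplit
      rw [map_sum, map_zero] at hcomp
      rw [Finset.sum_eq_single 0] at hcomp
      · rw [map_smul, homogeneousComponent_of_mem
            ((mem_homogeneousSubmodule _ _).mpr (by
              have := isHomogeneous_lap_iter hp 1
              rwa [show m - 2*1 = m - 2 by omega] at this)),
          if_pos rfl] at hcomp
        have hc1 : cgauss (0+1) ≠ 0 := by rw [show (0+1 : ℕ) = 1 from rfl, cgauss_one]; norm_num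
        have h5 : (cgauss (0+1))⁻¹ • (cgauss (0+1) • (lapPoly d)^[0+1] p) = 0 := by
          rw [hcomp, smul_zero]
        rw [smul_smul, inv_mul_cancel₀ hc1, one_smul] at h5
        rwa [Function.iterate_one] at h5
      · intro j hj hj0
        rw [map_smul]
        rcases le_or_gt (2*(j+1)) m with hle | hlt
        · have hhom := isHomogeneous_lap_iter hp (j+1)
          rw [homogeneousComponent_of_mem ((mem_homogeneousSubmodule _ _).mpr hhom),
            if_neg (by omega), smul_zero]
        · rw [lap_iter_vanish (j+1) p (by omega), map_zero, smul_zero]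
      · intro hnot
        exact absurd (Finset.mem_range.mpr (by omega)) hnot
end
end
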